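/- Let P and Q be orthogonal projections on a Hilbert space H, let μ ∈ (0,1), and suppose there exist vectors ψ ≠ 0 and ψ̃ with P ψ̃ = ψ and Q ψ = μ ψ̃. Then for λ = 1 + √μ (and also λ = 1 − √μ), the vector f = ψ + (λ−1) ψ̃ is a nonzero eigenvector of P + Q with eigenvalue λ. -/
import Mathlib


theorem eigenvector_of_sum_proj {H : Type*} [NormedAddCommGroup H] [InnerProductSpace ℂ H]
    [CompleteSpace H] (P Q : H →L[ℂ] H)
    (hP : P ∘L P = P) (hPa : ContinuousLinearMap.adjoint P = P)
    (hQ : Q ∘L Q = Q) (hQa : ContinuousLinearMap.adjoint Q = Q)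
    (μ : ℝ) (hμ0 : 0 < μ) (hμ1 : μ < 1) (ψ ψt : H) (hψ : ψ ≠ 0)
    (h1 : P ψt = ψ) (h2 : Q ψ = (μ : ℂ) • ψt) :
    (∀ lam : ℂ, (lam = 1 + (Real.sqrt μ : ℂ) ∨ lam = 1 - (Real.sqrt μ : ℂ)) →
      ψ + (lam - 1) • ψt ≠ 0 ∧ (P + Q) (ψ + (lam - 1) • ψt) = lam • (ψ + (lam - 1) • ψt)) := by
  have hμC : (μ : ℂ) ≠ 0 := by exact_mod_cast hμ0.ne'
  have hPψ : P ψ = ψ := by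
    rw [← h1, ← ContinuousLinearMap.comp_apply, hP]
  have hQt : Q ψt = ψt := by
    have hq : Q (Q ψ) = Q ψ := by rw [← ContinuousLinearMap.comp_apply, hQ]
    rw [h2, map_smul] at hq
    exact smul_right_injective H hμC hq
  have hsqrt : (Real.sqrt μ : ℂ) ^ 2 = (μ : ℂ) := by
    norm_cast
    exact Real.sq_sqrt hμ0.le
  have hs1 : Real.sqrt μ < 1 := by
    rw [show (1 : ℝ) = Real.sqrt 1 by simp]
    exact Real.sqrt_lt_sqrt hμ0.le hμ1
  intro lam hlam
  have hsq : (lam - 1) ^ 2 = (μ : ℂ) := by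
    rcases hlam with h | h <;> rw [h] <;> rw [← hsqrt] <;> ring
  have hlam0 : lam ≠ 0 := by
    have hre : 0 < lam.re := by
      rcases hlam with h | h <;> subst h <;> simp [Complex.add_re, Complex.sub_re] <;>
        [positivity; linarith [Real.sqrt_nonneg μ]]
    intro h0
    rw [h0] at hre
    simp at hre
  constructor
  · intro hf
    have hPf : P (ψ + (lam - 1) • ψt) = lam • ψ := by
      rw [map_add, map_smul, hPψ, h1]
      module
    rw [hf] at hPf
    simp only [map_zero] at hPf
    rcases smul_eq_zero.mp hPf.symm with h | h
    · exact hlam0 h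
    · exact hψ h
  · simp only [ContinuousLinearMap.add_apply, map_add, map_smul, hPψ, h1, h2, hQt]
    rw [← hsq]
    module
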